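/- arXiv:1110.6591 — 9 statements merged into one kernel-verified Lean document; each statement's English description precedes it below -/
import Mathlib

section
/- Let (Q, ·) be a finite quasigroup with parastrophe operations \ (left division) and / (right division). Then (Q,·) is orthogonal to its (12)-parastrophe x*y = y·x if and only if for all x, y, z ∈ Q: (x\z)·x = (y\z)·y implies x = y. -/
/-- a finite quasigroup is orthogonal to its (12)-parastrophe iff
(x\z)·x = (y\z)·y implies x = y. -/
theorem orth_12_parastrophe {Q : Type*} [Fintype Q] (mul ldiv : Q → Q → Q)
    (h1 : ∀ x y, mul x (ldiv x y) = y) (h2 : ∀ x y, ldiv x (mul x y) = y)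
    (hl : ∀ x, Function.Bijective (mul x)) (hr : ∀ y, Function.Bijective (fun x => mul x y)) :
    (∀ a b : Q, ∃! p : Q × Q, mul p.1 p.2 = a ∧ mul p.2 p.1 = b) ↔
      ∀ x y z : Q, mul (ldiv x z) x = mul (ldiv y z) y → x = y := by
  constructor
  · intro H x y z hxy
    obtain ⟨p, hp, hu⟩ := H z (mul (ldiv x z) x)
    have hx := hu (x, ldiv x z) ⟨h1 x z, rfl⟩
    have hy := hu (y, ldiv y z) ⟨h1 y z, hxy.symm⟩
    exact congrArg Prod.fst (hx.trans hy.symm)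
  · intro H a b
    have inj : Function.Injective (fun x => mul (ldiv x a) x) := fun x y h => H x y a h
    obtain ⟨p, hp⟩ := (Finite.injective_iff_bijective.mp inj).surjective b
    refine ⟨(p, ldiv p a), ⟨h1 p a, hp⟩, ?_⟩
    rintro ⟨q, r⟩ ⟨hq1, hq2⟩
    have hrr : r = ldiv q a := by rw [← hq1, h2]
    subst hrr
    have : q = p := inj (hq2.trans hp.symm)
    subst this
    rfl
end

section
/- Let (Q, ·) be a finite quasigroup. Then (Q,·) is orthogonal to its (13)-parastrophe if and only if for all x, y, z ∈ Q: (z·x)·x = (z·y)·y implies x = y. -/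
/-- a finite quasigroup is orthogonal to its (13)-parastrophe iff
(z·x)·x = (z·y)·y implies x = y. -/
theorem orth_13_parastrophe {Q : Type*} [Fintype Q] (mul rdiv : Q → Q → Q)
    (h1 : ∀ x y, mul (rdiv x y) y = x) (h2 : ∀ x y, rdiv (mul x y) y = x)
    (hl : ∀ x, Function.Bijective (mul x)) (hr : ∀ y, Function.Bijective (fun x => mul x y)) :
    (∀ a b : Q, ∃! p : Q × Q, mul p.1 p.2 = a ∧ rdiv p.1 p.2 = b) ↔
      ∀ x y z : Q, mul (mul z x) x = mul (mul z y) y → x = y := by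
  constructor
  · intro ho x y z h
    obtain ⟨p, hp, hu⟩ := ho (mul (mul z x) x) z
    have e1 : ((mul z x, x) : Q × Q) = p := hu _ ⟨rfl, h2 z x⟩
    have e2 : ((mul z y, y) : Q × Q) = p := hu _ ⟨h.symm, h2 z y⟩
    have := e1.trans e2.symm
    exact (Prod.ext_iff.mp this).2
  · intro hc a b
    have hinj : Function.Injective (fun v => mul (mul b v) v) := by
      intro x y h; exact hc x y b h
    obtain ⟨v, hv⟩ := (Finite.injective_iff_surjective.mp hinj) a
    refine ⟨(mul b v, v), ⟨hv, h2 b v⟩, ?_⟩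
    rintro ⟨u, w⟩ ⟨ha, hb⟩
    have hu : u = mul b w := by rw [← hb, h1]
    have : w = v := hinj (by simpa [← hu] using ha.trans hv.symm)
    simp [this, hu]
end

section
/- Let (Q, ·) be a finite quasigroup. Then (Q,·) is orthogonal to its (23)-parastrophe \ if and only if for all x, y, z ∈ Q: x·(x·z) = y·(y·z) implies x = y. -/
/-- a finite quasigroup is orthogonal to its (23)-parastrophe iff
x·(x·z) = y·(y·z) implies x = y. -/
theorem orth_23_parastrophe {Q : Type*} [Fintype Q] (mul ldiv : Q → Q → Q)
    (h1 : ∀ x y, mul x (ldiv x y) = y) (h2 : ∀ x y, ldiv x (mul x y) = y)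
    (hl : ∀ x, Function.Bijective (mul x)) (hr : ∀ y, Function.Bijective (fun x => mul x y)) :
    (∀ a b : Q, ∃! p : Q × Q, mul p.1 p.2 = a ∧ ldiv p.1 p.2 = b) ↔
      ∀ x y z : Q, mul x (mul x z) = mul y (mul y z) → x = y := by
  constructor
  · intro H x y z hxy
    obtain ⟨p, _, hp⟩ := H (mul x (mul x z)) z
    have hx := hp (x, mul x z) ⟨rfl, h2 x z⟩
    have hy := hp (y, mul y z) ⟨hxy.symm, h2 y z⟩
    have := hx.trans hy.symm
    exact congrArg Prod.fst this
  · intro H a b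
    have hinj : Function.Injective (fun x => mul x (mul x b)) := by
      intro x y hxy; exact H x y b hxy
    obtain ⟨x, hx⟩ := (Finite.injective_iff_surjective.mp hinj) a
    refine ⟨(x, mul x b), ⟨hx, h2 x b⟩, ?_⟩
    rintro ⟨x', y'⟩ ⟨ha, hb⟩
    have hy' : y' = mul x' b := by
      have := h1 x' y'
      rw [hb] at this; exact this.symm
    have : mul x' (mul x' b) = mul x (mul x b) := by
      rw [← hy', ha]; exact hx.symm
    have hxx := H x' x b this
    simp [hxx, hy']
end

section
/- Let (Q, ·) be a finite quasigroup. Then (Q,·) is orthogonal to its (132)-parastrophe if and only if for all x, y, z ∈ Q: (x·z)·x = (y·z)·y implies x = y. -/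
/-- a finite quasigroup is orthogonal to its (132)-parastrophe iff
(x·z)·x = (y·z)·y implies x = y.  Here p132 z x = y iff x·y = z. -/
theorem orth_132_parastrophe {Q : Type*} [Fintype Q] (mul p132 : Q → Q → Q)
    (h1 : ∀ x y, p132 (mul x y) x = y) (h2 : ∀ z x, mul x (p132 z x) = z)
    (hl : ∀ x, Function.Bijective (mul x)) (hr : ∀ y, Function.Bijective (fun x => mul x y)) :
    (∀ a b : Q, ∃! p : Q × Q, mul p.1 p.2 = a ∧ p132 p.1 p.2 = b) ↔
      ∀ x y z : Q, mul (mul x z) x = mul (mul y z) y → x = y := by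
  constructor
  · intro H x y z hxy
    obtain ⟨p, _, hu⟩ := H (mul (mul x z) x) z
    have e1 := hu (mul x z, x) ⟨rfl, h1 x z⟩
    have e2 := hu (mul y z, y) ⟨hxy.symm, h1 y z⟩
    have := e1.trans e2.symm
    exact congrArg Prod.snd this
  · intro H a b
    have hinj : Function.Injective (fun v => mul (mul v b) v) := fun x y h => H x y b h
    have hsurj := (Finite.injective_iff_surjective.mp hinj)
    obtain ⟨v, hv⟩ := hsurj a
    refine ⟨(mul v b, v), ⟨hv, h1 v b⟩, ?_⟩
    rintro ⟨u, w⟩ ⟨ha, hb⟩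
    simp only at ha hb
    have hu : mul w b = u := by rw [← hb]; exact h2 u w
    have : mul (mul w b) w = a := by rw [hu]; exact ha
    have hw : w = v := hinj (this.trans hv.symm)
    subst hw
    exact Prod.ext hu.symm rfl
end

section
/- Let (Q, +) be a finite abelian group, φ, ψ automorphisms of (Q,+), a ∈ Q, and A(x,y) = φ(x) + ψ(y) + a the associated T-quasigroup. Then A is orthogonal to its (12)-parastrophe if and only if both φ - ψ and φ + ψ are bijections of Q. -/
/-- a T-quasigroup A(x,y) = φx + ψy + a is orthogonal to its (12)-parastrophe
iff φ - ψ and φ + ψ are bijections. -/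
theorem T_orth_12 {Q : Type*} [AddCommGroup Q] [Fintype Q] (φ ψ : Q ≃+ Q) (a : Q)
    (A : Q → Q → Q) (hA : ∀ x y, A x y = φ x + ψ y + a) :
    (∀ c d : Q, ∃! p : Q × Q, A p.1 p.2 = c ∧ A p.2 p.1 = d) ↔
      Function.Bijective (fun x : Q => φ x - ψ x) ∧
        Function.Bijective (fun x : Q => φ x + ψ x) := by
  set G : Q × Q → Q × Q := fun p => (φ p.1 + ψ p.2, φ p.2 + ψ p.1) with hG
  have hiff : ∀ p : Q × Q, ∀ c d : Q,
      (A p.1 p.2 = c ∧ A p.2 p.1 = d) ↔ G p = (c - a, d - a) := by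
    intro p c d
    simp only [hA, hG, Prod.mk.injEq]
    constructor
    · rintro ⟨h1, h2⟩
      exact ⟨by rw [← h1]; abel, by rw [← h2]; abel⟩
    · rintro ⟨h1, h2⟩
      exact ⟨by rw [h1]; abel, by rw [h2]; abel⟩
  have key : (∀ c d : Q, ∃! p : Q × Q, A p.1 p.2 = c ∧ A p.2 p.1 = d) ↔
      Function.Bijective G := by
    rw [Function.bijective_iff_existsUnique]
    constructor
    · intro h b
      obtain ⟨p, hp, hu⟩ := h (b.1 + a) (b.2 + a)
      rw [hiff] at hp
      simp only [add_sub_cancel_right] at hp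
      refine ⟨p, ?_, fun q hq => hu q ?_⟩
      · show G p = b
        rw [hp]
      · show A q.1 q.2 = b.1 + a ∧ A q.2 q.1 = b.2 + a
        rw [hiff, add_sub_cancel_right, add_sub_cancel_right]
        have hq' : G q = b := hq
        rw [hq']
    · intro h c d
      obtain ⟨p, hp, hu⟩ := h (c - a, d - a)
      exact ⟨p, (hiff p c d).mpr hp, fun q hq => hu q ((hiff q c d).mp hq)⟩
  rw [key]
  have k1 : Function.Bijective G ↔ Function.Injective G :=
    ⟨fun h => h.injective, fun h => Finite.injective_iff_bijective.mp h⟩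
  have k2 : Function.Bijective (fun x : Q => φ x - ψ x) ↔
      Function.Injective (fun x : Q => φ x - ψ x) :=
    ⟨fun h => h.injective, fun h => Finite.injective_iff_bijective.mp h⟩
  have k3 : Function.Bijective (fun x : Q => φ x + ψ x) ↔
      Function.Injective (fun x : Q => φ x + ψ x) :=
    ⟨fun h => h.injective, fun h => Finite.injective_iff_bijective.mp h⟩
  rw [k1, k2, k3]
  constructor
  · intro hG'
    constructor
    · intro u v huv
      simp only at huv
      have : G (u, -u) = G (v, -v) := by
        simp only [hG, Prod.mk.injEq, map_neg]
        constructor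
        · rw [← sub_eq_add_neg, ← sub_eq_add_neg, huv]
        · rw [neg_add_eq_sub, neg_add_eq_sub, ← neg_sub (φ u) (ψ u),
            ← neg_sub (φ v) (ψ v), huv]
      have := hG' this
      exact (Prod.mk.injEq _ _ _ _ ▸ this).1
    · intro u v huv
      simp only at huv
      have : G (u, u) = G (v, v) := by
        simp only [hG, Prod.mk.injEq]
        exact ⟨huv, huv⟩
      have := hG' this
      exact (Prod.mk.injEq _ _ _ _ ▸ this).1
  · rintro ⟨hm, hp⟩
    rintro ⟨x, y⟩ ⟨x', y'⟩ hxy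
    simp only [hG, Prod.mk.injEq] at hxy
    obtain ⟨h1, h2⟩ := hxy
    have e1 : φ (x - x') + ψ (y - y') = 0 := by
      rw [map_sub, map_sub]; rw [← sub_eq_zero] at h1; rw [← h1]; abel
    have e2 : φ (y - y') + ψ (x - x') = 0 := by
      rw [map_sub, map_sub]; rw [← sub_eq_zero] at h2; rw [← h2]; abel
    set u := x - x'
    set v := y - y'
    have hsum : u + v = 0 := by
      have : (fun x : Q => φ x + ψ x) (u + v) = (fun x : Q => φ x + ψ x) 0 := by
        simp only [map_add, map_zero, add_zero]
        rw [show φ u + φ v + (ψ u + ψ v) = (φ u + ψ v) + (φ v + ψ u) by abel,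
          e1, e2, add_zero]
      exact hp this
    have hv : v = -u := by rw [eq_neg_iff_add_eq_zero, add_comm]; exact hsum
    have hu : u = 0 := by
      have : (fun x : Q => φ x - ψ x) u = (fun x : Q => φ x - ψ x) 0 := by
        simp only [map_zero, sub_zero, sub_self]
        rw [sub_eq_iff_eq_add, zero_add, ← neg_neg (ψ u), ← map_neg, ← hv]
        rw [← sub_eq_zero] at e1 ⊢
        rw [← e1]; abel
      exact hm this
    have hx : x = x' := by rwa [← sub_eq_zero]
    have hy : y = y' := by
      have : v = 0 := by rw [hv, hu, neg_zero]
      rwa [← sub_eq_zero]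
    simp [hx, hy]
end

section
/- Let (Q, +) be a finite abelian group, φ, ψ automorphisms, a ∈ Q, and A(x,y) = φ(x) + ψ(y) + a. Then A is orthogonal to its (13)-parastrophe if and only if the map x ↦ x + φ(x) is a bijection of Q. -/
/-- a T-quasigroup A(x,y) = φx + ψy + a is orthogonal to its (13)-parastrophe
iff x ↦ x + φx is a bijection. -/
theorem T_orth_13 {Q : Type*} [AddCommGroup Q] [Fintype Q] (φ ψ : Q ≃+ Q) (a : Q)
    (A p13 : Q → Q → Q) (hA : ∀ x y, A x y = φ x + ψ y + a)
    (h1 : ∀ x y, A (p13 x y) y = x) (h2 : ∀ x y, p13 (A x y) y = x) :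
    (∀ c d : Q, ∃! p : Q × Q, A p.1 p.2 = c ∧ p13 p.1 p.2 = d) ↔
      Function.Bijective (fun x : Q => x + φ x) := by
  constructor
  · intro horth
    rw [Finite.injective_iff_bijective.symm]
    intro u v huv
    dsimp only at huv
    obtain ⟨p, hp, hup⟩ := horth (φ u + u + φ a + a) 0
    have key : ∀ w : Q, w + φ w = u + φ u → (A 0 (ψ.symm w), ψ.symm w) = p := by
      intro w hw
      apply hup
      refine ⟨?_, h2 0 (ψ.symm w)⟩
      rw [hA, hA]
      simp only [map_add, map_zero, ψ.apply_symm_apply, zero_add]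
      rw [← sub_eq_zero] at hw ⊢; rw [← hw]; abel
    have e1 := key u rfl
    have e2 := key v huv.symm
    have : ψ.symm u = ψ.symm v := by
      have := e1.trans e2.symm
      exact congrArg Prod.snd this
    simpa using congrArg ψ this
  · intro hb c d
    set f : Q → Q := fun x : Q => x + φ x with hf
    let e := Equiv.ofBijective f hb
    set t := c - φ (φ d) - φ a - a with ht
    set y := ψ.symm (e.symm t) with hy
    have hft : ψ y + φ (ψ y) = t := by
      have : f (e.symm t) = t := e.apply_symm_apply t
      simpa [hf, hy] using this
    refine ⟨(A d y, y), ⟨?_, h2 d y⟩, ?_⟩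
    · rw [hA, hA]
      simp only [map_add]
      rw [← sub_eq_zero] at hft ⊢; rw [← hft, ht]; abel
    · rintro ⟨x', y'⟩ ⟨hc, hd⟩
      dsimp only at hc hd
      have hx' : x' = A d y' := by rw [← hd, h1]
      have hAy' : A (A d y') y' = c := by rw [← hx']; exact hc
      rw [hA, hA] at hAy'
      simp only [map_add] at hAy'
      have hfy' : f (ψ y') = t := by
        simp only [hf]
        rw [← sub_eq_zero] at hAy' ⊢; rw [← hAy', ht]; abel
      have : ψ y' = e.symm t := by
        apply e.injective
        simp [e, hfy']
      have hyy : y' = y := by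
        apply ψ.injective
        rw [this, hy, ψ.apply_symm_apply]
      simp [hyy, hx']
end

section
/- Let (Q, +) be a finite abelian group, φ, ψ automorphisms, a ∈ Q, and A(x,y) = φ(x) + ψ(y) + a. Then A is orthogonal to its (23)-parastrophe if and only if the map x ↦ x + ψ(x) is a bijection of Q. -/
/-- a T-quasigroup A(x,y) = φx + ψy + a is orthogonal to its (23)-parastrophe
iff x ↦ x + ψx is a bijection. -/
theorem T_orth_23 {Q : Type*} [AddCommGroup Q] [Fintype Q] (φ ψ : Q ≃+ Q) (a : Q)
    (A p23 : Q → Q → Q) (hA : ∀ x y, A x y = φ x + ψ y + a)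
    (h1 : ∀ x y, A x (p23 x y) = y) (h2 : ∀ x y, p23 x (A x y) = y) :
    (∀ c d : Q, ∃! p : Q × Q, A p.1 p.2 = c ∧ p23 p.1 p.2 = d) ↔
      Function.Bijective (fun x : Q => x + ψ x) := by
  set F : Q → Q := fun x => φ x + ψ (φ x) with hF
  have key : ∀ x d, A x (A x d) = F x + (ψ (ψ d) + ψ a + a) := by
    intro x d
    rw [hA, hA, map_add, map_add, hF]
    beta_reduce
    abel
  have hTF : ∀ y, (fun x : Q => x + ψ x) y = F (φ.symm y) := by
    intro y; simp [hF]
  constructor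
  · intro h
    have hFinj : Function.Injective F := by
      intro u v huv
      obtain ⟨p, _, hup⟩ := h (A u (A u 0)) 0
      have e1 := hup (u, A u 0) ⟨rfl, h2 u 0⟩
      have e2 := hup (v, A v 0) ⟨by rw [key, key, huv], h2 v 0⟩
      have := e2.trans e1.symm
      exact (congrArg Prod.fst this).symm
    have hTinj : Function.Injective (fun x : Q => x + ψ x) := by
      intro u v huv
      rw [hTF, hTF] at huv
      have := hFinj huv
      exact φ.symm.injective this
    exact Finite.injective_iff_bijective.mp hTinj
  · intro hT c d
    have hFbij : Function.Bijective F := by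
      have : F = (fun x : Q => x + ψ x) ∘ φ := by
        funext x; simp [hF]
      rw [this]
      exact hT.comp φ.bijective
    obtain ⟨x, hx⟩ := hFbij.surjective (c - (ψ (ψ d) + ψ a + a))
    refine ⟨(x, A x d), ⟨by rw [key, hx]; abel, h2 x d⟩, ?_⟩
    rintro ⟨u, v⟩ ⟨hc, hd⟩
    have hv : v = A u d := by
      have := h1 u v
      rw [hd] at this
      exact this.symm
    have hu : u = x := by
      apply hFbij.injective
      rw [hx]
      have : A u (A u d) = c := by rw [← hv]; exact hc
      rw [key] at this
      rw [← this]; abel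
    simp [hu, hv]
end

section
/- Let (Q, +) be a finite abelian group, φ, ψ automorphisms, a ∈ Q, and A(x,y) = φ(x) + ψ(y) + a. Then A is orthogonal to its (132)-parastrophe if and only if the map x ↦ φ²(x) + ψ(x) is a bijection of Q. -/
/-- a T-quasigroup A(x,y) = φx + ψy + a is orthogonal to its (132)-parastrophe
iff x ↦ φ²x + ψx is a bijection.  Here p132 z x = y iff A x y = z. -/
theorem T_orth_132 {Q : Type*} [AddCommGroup Q] [Fintype Q] (φ ψ : Q ≃+ Q) (a : Q)
    (A p132 : Q → Q → Q) (hA : ∀ x y, A x y = φ x + ψ y + a)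
    (h1 : ∀ x y, p132 (A x y) x = y) (h2 : ∀ z x, A x (p132 z x) = z) :
    (∀ c d : Q, ∃! p : Q × Q, A p.1 p.2 = c ∧ p132 p.1 p.2 = d) ↔
      Function.Bijective (fun x : Q => φ (φ x) + ψ x) := by
  constructor
  · intro h
    rw [Function.bijective_iff_existsUnique]
    intro t
    obtain ⟨p, hp, hu⟩ := h (t + a + φ a) 0
    refine ⟨p.2, ?_, ?_⟩
    · have hx : A p.2 0 = p.1 := by
        have := h2 p.1 p.2
        rwa [hp.2] at this
      have h1' := hp.1
      rw [hA] at h1' hx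
      rw [← hx] at h1'
      simp only [map_zero, map_add, add_zero] at h1'
      have key : φ (φ p.2) + ψ p.2 + (a + φ a) = t + (a + φ a) := by
        rw [show t + (a + φ a) = t + a + φ a by abel, ← h1']; abel
      exact add_right_cancel key
    · intro y' hy'
      have hxA : A (φ y' + ψ (0:Q) + a) y' = t + a + φ a := by
        rw [hA]; simp only [map_add, map_zero, add_zero] at hy' ⊢
        rw [← hy']; abel
      have hd : p132 (φ y' + ψ (0:Q) + a) y' = 0 := by
        have := h1 y' 0
        rwa [hA] at this
      have := hu (φ y' + ψ (0:Q) + a, y') ⟨hxA, hd⟩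
      exact (congrArg Prod.snd this)
  · intro h c d
    obtain ⟨y, hy, hyu⟩ := (Function.bijective_iff_existsUnique _).mp h
      (c - a - φ (ψ d) - φ a)
    refine ⟨(φ y + ψ d + a, y), ⟨?_, ?_⟩, ?_⟩
    · rw [hA]; simp only [map_add]
      rw [show φ (φ y) + φ (ψ d) + φ a + ψ y + a
          = (φ (φ y) + ψ y) + a + φ (ψ d) + φ a by abel, hy]
      abel
    · have : A y d = φ y + ψ d + a := by rw [hA]
      have := h1 y d
      rwa [hA] at this
    · rintro ⟨x', y'⟩ ⟨hc, hd⟩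
      have hx' : x' = φ y' + ψ d + a := by
        have := h2 x' y'
        rw [hd, hA] at this
        exact this.symm
      have : y' = y := by
        apply hyu
        rw [hA, hx'] at hc
        simp only [map_add] at hc ⊢
        have : φ (φ y') + ψ y' + (a + φ (ψ d) + φ a) = c := by
          rw [← hc]; abel
        rw [eq_sub_iff_add_eq, eq_sub_iff_add_eq, eq_sub_iff_add_eq]
        rw [← this]; abel
      simp only [Prod.mk.injEq]
      exact ⟨by rw [hx', this], this⟩
end

section
/- Let p be a prime and k, m, a ∈ Z_p with k, m, k+m, k−m, k+1, m+1, k²+m, k+m² all nonzero mod p. Then the T-quasigroup on Z_p given by x∘y = kx + my + a is orthogonal to each of its five parastrophes ((12), (13), (23), (123), (132)). -/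
/-- Orthogonality of two binary operations on a set. -/
def OrthOps {Q : Type*} (A B : Q → Q → Q) : Prop :=
  ∀ c d : Q, ∃! p : Q × Q, A p.1 p.2 = c ∧ B p.1 p.2 = d

/-- A 2×2 linear system with nonzero determinant over `ZMod p` has a unique solution. -/
lemma lin_uniq (p : ℕ) [Fact p.Prime] (A₁ B₁ A₂ B₂ c₁ c₂ : ZMod p)
    (hdet : A₁ * B₂ - B₁ * A₂ ≠ 0) :
    ∃! q : (ZMod p) × (ZMod p), A₁ * q.1 + B₁ * q.2 = c₁ ∧ A₂ * q.1 + B₂ * q.2 = c₂ := by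
  refine ⟨((A₁ * B₂ - B₁ * A₂)⁻¹ * (B₂ * c₁ - B₁ * c₂),
          (A₁ * B₂ - B₁ * A₂)⁻¹ * (A₁ * c₂ - A₂ * c₁)), ⟨?_, ?_⟩, ?_⟩
  · field_simp
    ring
  · linear_combination c₂ * mul_inv_cancel₀ hdet
  · rintro ⟨x, y⟩ ⟨h1, h2⟩
    have hx : (A₁ * B₂ - B₁ * A₂) * x = B₂ * c₁ - B₁ * c₂ := by
      linear_combination B₂ * h1 - B₁ * h2
    have hy : (A₁ * B₂ - B₁ * A₂) * y = A₁ * c₂ - A₂ * c₁ := by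
      linear_combination A₁ * h2 - A₂ * h1
    have hx' : x = (A₁ * B₂ - B₁ * A₂)⁻¹ * (B₂ * c₁ - B₁ * c₂) := by
      rw [← hx, inv_mul_cancel_left₀ hdet]
    have hy' : y = (A₁ * B₂ - B₁ * A₂)⁻¹ * (A₁ * c₂ - A₂ * c₁) := by
      rw [← hy, inv_mul_cancel_left₀ hdet]
    exact Prod.ext hx' hy'

/-- over Z_p with k, m, k+m, k-m, k+1, m+1, k²+m, k+m² nonzero, the
T-quasigroup x∘y = kx + my + a is orthogonal to each of its five parastrophes. -/
theorem Tquasigroup_orth_all_parastrophes (p : ℕ) [Fact p.Prime] (k m a : ZMod p)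
    (hk : k ≠ 0) (hm : m ≠ 0) (hkm : k + m ≠ 0) (hkm' : k - m ≠ 0)
    (hk1 : k + 1 ≠ 0) (hm1 : m + 1 ≠ 0) (hk2m : k ^ 2 + m ≠ 0) (hkm2 : k + m ^ 2 ≠ 0)
    (mul p13 p23 p123 p132 : ZMod p → ZMod p → ZMod p)
    (hmul : ∀ x y, mul x y = k * x + m * y + a)
    (h13a : ∀ x y, mul (p13 x y) y = x) (h13b : ∀ x y, p13 (mul x y) y = x)
    (h23a : ∀ x y, mul x (p23 x y) = y) (h23b : ∀ x y, p23 x (mul x y) = y)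
    (h123a : ∀ y z, mul z (p123 y z) = y) (h123b : ∀ z x, p123 (mul z x) z = x)
    (h132a : ∀ x y, p132 (mul x y) x = y) (h132b : ∀ z x, mul x (p132 z x) = z) :
    OrthOps mul (fun x y => mul y x) ∧ OrthOps mul p13 ∧ OrthOps mul p23 ∧
      OrthOps mul p123 ∧ OrthOps mul p132 := by
  refine ⟨?_, ?_, ?_, ?_, ?_⟩
  · -- swap
    intro c d
    have det : k * k - m * m ≠ 0 := fun h => (mul_ne_zero hkm hkm') (by linear_combination h)
    refine (existsUnique_congr (fun q => ?_)).mpr (lin_uniq p k m m k (c - a) (d - a) det)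
    simp only [hmul]
    constructor
    · rintro ⟨h1, h2⟩
      exact ⟨by linear_combination h1, by linear_combination h2⟩
    · rintro ⟨h1, h2⟩
      exact ⟨by linear_combination h1, by linear_combination h2⟩
  · -- p13
    intro c d
    have det : k * (-m) - m * 1 ≠ 0 := fun h => (mul_ne_zero hm hk1) (by linear_combination -h)
    refine (existsUnique_congr (fun q => ?_)).mpr
      (lin_uniq p k m 1 (-m) (c - a) (k * d + a) det)
    constructor
    · rintro ⟨h1, h2⟩
      have hx : k * d + m * q.2 + a = q.1 := by
        rw [← hmul, ← h2]; exact h13a q.1 q.2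
      exact ⟨by rw [hmul] at h1; linear_combination h1, by linear_combination -hx⟩
    · rintro ⟨h1, h2⟩
      have hx : mul d q.2 = q.1 := by rw [hmul]; linear_combination -h2
      refine ⟨by rw [hmul]; linear_combination h1, ?_⟩
      rw [← hx]; exact h13b d q.2
  · -- p23
    intro c d
    have det : k * 1 - m * (-k) ≠ 0 := fun h => (mul_ne_zero hk hm1) (by linear_combination h)
    refine (existsUnique_congr (fun q => ?_)).mpr
      (lin_uniq p k m (-k) 1 (c - a) (m * d + a) det)
    constructor
    · rintro ⟨h1, h2⟩
      have hy : k * q.1 + m * d + a = q.2 := by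
        rw [← hmul, ← h2]; exact h23a q.1 q.2
      exact ⟨by rw [hmul] at h1; linear_combination h1, by linear_combination -hy⟩
    · rintro ⟨h1, h2⟩
      have hy : mul q.1 d = q.2 := by rw [hmul]; linear_combination -h2
      refine ⟨by rw [hmul]; linear_combination h1, ?_⟩
      rw [← hy]; exact h23b q.1 d
  · -- p123
    intro c d
    have det : k * (-k) - m * 1 ≠ 0 := fun h => hk2m (by linear_combination -h)
    refine (existsUnique_congr (fun q => ?_)).mpr
      (lin_uniq p k m 1 (-k) (c - a) (m * d + a) det)
    constructor
    · rintro ⟨h1, h2⟩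
      have hx : k * q.2 + m * d + a = q.1 := by
        rw [← hmul, ← h2]; exact h123a q.1 q.2
      exact ⟨by rw [hmul] at h1; linear_combination h1, by linear_combination -hx⟩
    · rintro ⟨h1, h2⟩
      have hx : mul q.2 d = q.1 := by rw [hmul]; linear_combination -h2
      refine ⟨by rw [hmul]; linear_combination h1, ?_⟩
      rw [← hx]; exact h123b q.2 d
  · -- p132
    intro c d
    have det : k * (-k) - m * 1 ≠ 0 := fun h => hk2m (by linear_combination -h)
    refine (existsUnique_congr (fun q => ?_)).mpr
      (lin_uniq p k m 1 (-k) (c - a) (m * d + a) det)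
    constructor
    · rintro ⟨h1, h2⟩
      have hx : k * q.2 + m * d + a = q.1 := by
        rw [← hmul, ← h2]; exact h132b q.1 q.2
      exact ⟨by rw [hmul] at h1; linear_combination h1, by linear_combination -hx⟩
    · rintro ⟨h1, h2⟩
      have hx : mul q.2 d = q.1 := by rw [hmul]; linear_combination -h2
      refine ⟨by rw [hmul]; linear_combination h1, ?_⟩
      rw [← hx]; exact h132a q.2 d
end
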